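/- Gateaux derivative of the dual objective and the optimality inequality: let y > 0 and let ξ*, ξ' be nonnegative F-measurable random variables with E[ξ*·H] < ∞ and E[ξ'·H] < ∞. Setting ξ^{(ε)} := ε·ξ' + (1−ε)·ξ*, one has lim_{ε↓0} ε^{-1}( E[Ũ(y·ξ^{(ε)}(·),·)] − E[Ũ(y·ξ*(·),·)] ) = −y·E[ min(I(y·ξ*(·),·), H(·))·(ξ'(·) − ξ*(·)) ]. Consequently, if E[Ũ(y·ξ*(·),·)] ≤ E[Ũ(y·ξ^{(ε)}(·),·)] for every ε ∈ (0,1], then E[min(I(y·ξ*(·),·), H(·))·ξ'(·)] ≤ E[min(I(y·ξ*(·),·), H(·))·ξ*(·)]. -/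

import Mathlib

open MeasureTheory Set Filter
open scoped ENNReal NNReal Topology

/-- The convex dual `Ũ(y) := sup_{0 ≤ z ≤ H} (U(z) − y·z)` (for a fixed state). -/
noncomputable def dualU (U : ℝ → ℝ) (H y : ℝ) : ℝ :=
  sSup ((fun z => U z - y * z) '' Set.Icc 0 H)

/-- `min(I(y), H)`, where `I(y) := inf{ z ∈ (0,H) : U'(z) < y }` with the
conventions `inf ∅ = +∞` and `I(0) = +∞` (so that the minimum with `H`
equals `H` in those cases). -/
noncomputable def IminU (U : ℝ → ℝ) (H y : ℝ) : ℝ :=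
  sInf ({z | z ∈ Set.Ioo 0 H ∧ deriv U z < y} ∪ {H})

section core
variable {f : ℝ → ℝ} {h : ℝ}

private lemma setbdd (hh : 0 < h) (q : ℝ) :
    (0 : ℝ) ∈ lowerBounds ({z | z ∈ Set.Ioo 0 h ∧ deriv f z < q} ∪ {h}) := by
  rintro z (⟨⟨hz, _⟩, _⟩ | rfl)
  · exact hz.le
  · exact hh.le

lemma IminU_mem (hh : 0 < h) (q : ℝ) : IminU f h q ∈ Set.Icc 0 h := by
  constructor
  · exact le_csInf (by simp) (fun z hz => setbdd (f := f) hh q hz)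
  · exact csInf_le ⟨0, setbdd hh q⟩ (by simp)

lemma IminU_antitone (hh : 0 < h) : Antitone (IminU f h) := by
  intro p q hpq
  refine csInf_le_csInf ⟨0, setbdd hh q⟩ (by simp) ?_
  rintro z (⟨hz, hz'⟩ | rfl)
  · exact Or.inl ⟨hz, hz'.trans_le hpq⟩
  · exact Or.inr rfl

lemma deriv_ge_of_lt_IminU (hh : 0 < h) {q c : ℝ} (hc : c ∈ Set.Ioo 0 h)
    (hlt : c < IminU f h q) : q ≤ deriv f c := by
  by_contra hq
  exact absurd (csInf_le ⟨0, setbdd hh q⟩ (Or.inl ⟨hc, lt_of_not_ge hq⟩)) (not_le.2 hlt)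

lemma deriv_lt_of_IminU_lt (hconc : StrictConcaveOn ℝ (Set.Ioo 0 h) f)
    (hdiff : ∀ z ∈ Set.Ioo 0 h, DifferentiableAt ℝ f z) {q c : ℝ} (hc : c ∈ Set.Ioo 0 h)
    (hlt : IminU f h q < c) : deriv f c < q := by
  obtain ⟨w, hw, hwc⟩ := exists_lt_of_csInf_lt (s := {z | z ∈ Set.Ioo 0 h ∧ deriv f z < q} ∪ {h})
    (by simp) hlt
  rcases hw with ⟨hw1, hw2⟩ | rfl
  · exact lt_trans (hconc.strictAntiOn_deriv hdiff hw1 hc hwc) hw2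
  · exact absurd hc.2 (not_lt.2 hwc.le)
end core

section core
variable {f : ℝ → ℝ} {h : ℝ}

lemma IminU_isGreatest (hh : 0 < h) (hcont : ContinuousOn f (Set.Ici 0))
    (hconc : StrictConcaveOn ℝ (Set.Ioo 0 h) f)
    (hdiff : ∀ z ∈ Set.Ioo 0 h, DifferentiableAt ℝ f z) (q : ℝ) :
    IsGreatest ((fun z => f z - q * z) '' Set.Icc 0 h)
      (f (IminU f h q) - q * IminU f h q) := by
  have hZ : IminU f h q ∈ Set.Icc 0 h := IminU_mem hh q
  constructor
  · exact ⟨IminU f h q, hZ, rfl⟩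
  · rintro x ⟨z, hz, rfl⟩
    rcases lt_trichotomy z (IminU f h q) with hlt | heq | hgt
    · obtain ⟨c, hc, hc'⟩ := exists_hasDerivAt_eq_slope f (deriv f) hlt
        (hcont.mono (fun x hx => le_trans hz.1 hx.1))
        (fun x hx => (hdiff x ⟨lt_of_le_of_lt hz.1 hx.1, lt_of_lt_of_le hx.2 hZ.2⟩).hasDerivAt)
      have hcm : c ∈ Set.Ioo 0 h := ⟨lt_of_le_of_lt hz.1 hc.1, lt_of_lt_of_le hc.2 hZ.2⟩
      have h1 : q ≤ (f (IminU f h q) - f z) / (IminU f h q - z) :=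
        hc' ▸ deriv_ge_of_lt_IminU hh hcm hc.2
      have h2 := (le_div_iff₀ (by linarith : (0:ℝ) < IminU f h q - z)).1 h1
      show f z - q * z ≤ _
      nlinarith
    · rw [heq]
    · obtain ⟨c, hc, hc'⟩ := exists_hasDerivAt_eq_slope f (deriv f) hgt
        (hcont.mono (fun x hx => le_trans hZ.1 hx.1))
        (fun x hx => (hdiff x ⟨lt_of_le_of_lt hZ.1 hx.1, lt_of_lt_of_le hx.2 hz.2⟩).hasDerivAt)
      have hcm : c ∈ Set.Ioo 0 h := ⟨lt_of_le_of_lt hZ.1 hc.1, lt_of_lt_of_le hc.2 hz.2⟩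
      have h1 : (f z - f (IminU f h q)) / (z - IminU f h q) < q :=
        hc' ▸ deriv_lt_of_IminU_lt hconc hdiff hcm hc.1
      have h2 := (div_le_iff₀ (by linarith : (0:ℝ) < z - IminU f h q)).1 h1.le
      show f z - q * z ≤ _
      nlinarith

lemma dualU_eq (hh : 0 < h) (hcont : ContinuousOn f (Set.Ici 0))
    (hconc : StrictConcaveOn ℝ (Set.Ioo 0 h) f)
    (hdiff : ∀ z ∈ Set.Ioo 0 h, DifferentiableAt ℝ f z) (q : ℝ) :
    dualU f h q = f (IminU f h q) - q * IminU f h q :=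
  (IminU_isGreatest hh hcont hconc hdiff q).csSup_eq

lemma dualU_subgrad (hh : 0 < h) (hcont : ContinuousOn f (Set.Ici 0))
    (hconc : StrictConcaveOn ℝ (Set.Ioo 0 h) f)
    (hdiff : ∀ z ∈ Set.Ioo 0 h, DifferentiableAt ℝ f z) (p q : ℝ) :
    dualU f h q - (p - q) * IminU f h q ≤ dualU f h p := by
  have h1 : f (IminU f h q) - p * IminU f h q ≤ dualU f h p :=
    le_csSup (IminU_isGreatest hh hcont hconc hdiff p).bddAbove
      ⟨IminU f h q, IminU_mem hh q, rfl⟩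
  rw [dualU_eq hh hcont hconc hdiff q]
  linarith
end core

section core
variable {f : ℝ → ℝ} {h : ℝ}

lemma IminU_tendsto_left (hh : 0 < h) (hconc : StrictConcaveOn ℝ (Set.Ioo 0 h) f)
    (hdiff : ∀ z ∈ Set.Ioo 0 h, DifferentiableAt ℝ f z) (q : ℝ) :
    Tendsto (IminU f h) (𝓝[<] q) (𝓝 (IminU f h q)) := by
  have hA := IminU_antitone (f := f) hh
  have key : sInf (IminU f h '' Set.Iio q) = IminU f h q := by
    have hne : (IminU f h '' Set.Iio q).Nonempty := ⟨_, ⟨q - 1, by simp, rfl⟩⟩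
    have hlb : IminU f h q ≤ sInf (IminU f h '' Set.Iio q) := by
      refine le_csInf hne ?_
      rintro x ⟨q', hq', rfl⟩
      exact hA (le_of_lt hq')
    refine le_antisymm ?_ hlb
    by_contra hcon
    push_neg at hcon
    set L := sInf (IminU f h '' Set.Iio q) with hL
    obtain ⟨c, hc1, hc2⟩ := exists_between hcon
    have hcio : c ∈ Set.Ioo 0 h := by
      constructor
      · exact lt_of_le_of_lt (IminU_mem hh q).1 hc1
      · exact lt_of_lt_of_le hc2 (le_trans (csInf_le ⟨0, fun x ⟨p, _, hp⟩ => hp ▸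
          (IminU_mem hh p).1⟩ ⟨q - 1, by simp, rfl⟩) (IminU_mem hh (q-1)).2)
    have hlt : deriv f c < q := deriv_lt_of_IminU_lt hconc hdiff hcio hc1
    have hge : ∀ q' < q, q' ≤ deriv f c := by
      intro q' hq'
      refine deriv_ge_of_lt_IminU hh hcio (lt_of_lt_of_le hc2 ?_)
      exact csInf_le ⟨0, fun x ⟨p, _, hp⟩ => hp ▸ (IminU_mem hh p).1⟩ ⟨q', hq', rfl⟩
    have := hge ((deriv f c + q) / 2) (by linarith)
    linarith
  have := hA.tendsto_nhdsLT q
  rwa [key] at this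

lemma IminU_tendsto_right (hh : 0 < h) (hconc : StrictConcaveOn ℝ (Set.Ioo 0 h) f)
    (hdiff : ∀ z ∈ Set.Ioo 0 h, DifferentiableAt ℝ f z) (q : ℝ) :
    Tendsto (IminU f h) (𝓝[>] q) (𝓝 (IminU f h q)) := by
  have hA := IminU_antitone (f := f) hh
  have key : sSup (IminU f h '' Set.Ioi q) = IminU f h q := by
    have hne : (IminU f h '' Set.Ioi q).Nonempty := ⟨_, ⟨q + 1, by simp, rfl⟩⟩
    have hub : sSup (IminU f h '' Set.Ioi q) ≤ IminU f h q := by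
      refine csSup_le hne ?_
      rintro x ⟨q', hq', rfl⟩
      exact hA (le_of_lt hq')
    refine le_antisymm hub ?_
    by_contra hcon
    push_neg at hcon
    set L := sSup (IminU f h '' Set.Ioi q) with hL
    have hbdd : BddAbove (IminU f h '' Set.Ioi q) := by
      refine ⟨IminU f h q, ?_⟩
      rintro x ⟨p, hp, rfl⟩
      exact hA (le_of_lt hp)
    have hLnn : 0 ≤ L :=
      le_trans (IminU_mem hh (q + 1)).1 (le_csSup hbdd ⟨q + 1, by simp, rfl⟩)
    have hkey : ∀ c ∈ Set.Ioo L (IminU f h q), deriv f c = q := by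
      intro c hc
      have hcio : c ∈ Set.Ioo 0 h :=
        ⟨lt_of_le_of_lt hLnn hc.1, lt_of_lt_of_le hc.2 (IminU_mem hh q).2⟩
      have hge : q ≤ deriv f c := deriv_ge_of_lt_IminU hh hcio hc.2
      have hle : ∀ q' > q, deriv f c < q' := by
        intro q' hq'
        refine deriv_lt_of_IminU_lt hconc hdiff hcio (lt_of_le_of_lt ?_ hc.1)
        exact le_csSup hbdd ⟨q', hq', rfl⟩
      by_contra hne'
      have hgt : q < deriv f c := lt_of_le_of_ne hge (Ne.symm hne')
      have := hle ((deriv f c + q) / 2) (by linarith)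
      linarith
    set c1 := L + (IminU f h q - L) / 3
    set c2 := L + 2 * (IminU f h q - L) / 3
    have hc1 : c1 ∈ Set.Ioo L (IminU f h q) := by constructor <;> (simp only [c1]; linarith)
    have hc2 : c2 ∈ Set.Ioo L (IminU f h q) := by constructor <;> (simp only [c2]; linarith)
    have h12 : c1 < c2 := by simp only [c1, c2]; linarith
    have := hconc.strictAntiOn_deriv hdiff
      ⟨lt_of_le_of_lt hLnn hc1.1, lt_of_lt_of_le hc1.2 (IminU_mem hh q).2⟩
      ⟨lt_of_le_of_lt hLnn hc2.1, lt_of_lt_of_le hc2.2 (IminU_mem hh q).2⟩ h12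
    rw [hkey c1 hc1, hkey c2 hc2] at this
    exact lt_irrefl _ this
  have := hA.tendsto_nhdsGT q
  rwa [key] at this
end core

section core
variable {f : ℝ → ℝ} {h : ℝ}

lemma dualU_lip (hh : 0 < h) (hcont : ContinuousOn f (Set.Ici 0))
    (hconc : StrictConcaveOn ℝ (Set.Ioo 0 h) f)
    (hdiff : ∀ z ∈ Set.Ioo 0 h, DifferentiableAt ℝ f z) (p q : ℝ) :
    |dualU f h p - dualU f h q| ≤ h * |p - q| := by
  have h1 := dualU_subgrad hh hcont hconc hdiff p q
  have h2 := dualU_subgrad hh hcont hconc hdiff q p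
  have hZq := IminU_mem (f := f) hh q
  have hZp := IminU_mem (f := f) hh p
  rw [abs_le]
  constructor
  · have : (p - q) * IminU f h q ≤ h * |p - q| := by
      calc (p - q) * IminU f h q ≤ |(p - q) * IminU f h q| := le_abs_self _
      _ = |p - q| * |IminU f h q| := abs_mul _ _
      _ ≤ |p - q| * h := by
          refine mul_le_mul_of_nonneg_left ?_ (abs_nonneg _)
          rw [abs_of_nonneg hZq.1]; exact hZq.2
      _ = h * |p - q| := mul_comm _ _
    linarith
  · have : (q - p) * IminU f h p ≤ h * |p - q| := by
      calc (q - p) * IminU f h p ≤ |(q - p) * IminU f h p| := le_abs_self _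
      _ = |q - p| * |IminU f h p| := abs_mul _ _
      _ ≤ |q - p| * h := by
          refine mul_le_mul_of_nonneg_left ?_ (abs_nonneg _)
          rw [abs_of_nonneg hZp.1]; exact hZp.2
      _ = h * |p - q| := by rw [mul_comm, abs_sub_comm]
    linarith

lemma IminU_comp_tendsto (hh : 0 < h) (hconc : StrictConcaveOn ℝ (Set.Ioo 0 h) f)
    (hdiff : ∀ z ∈ Set.Ioo 0 h, DifferentiableAt ℝ f z) (q d : ℝ) :
    Tendsto (fun ε : ℝ => IminU f h (q + ε * d)) (𝓝[>] (0:ℝ)) (𝓝 (IminU f h q)) := by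
  rcases lt_trichotomy d 0 with hd | rfl | hd
  · have h1 : Tendsto (fun ε : ℝ => q + ε * d) (𝓝[>] (0:ℝ)) (𝓝[<] q) := by
      refine tendsto_nhdsWithin_of_tendsto_nhds_of_eventually_within _ ?_ ?_
      · have : Tendsto (fun ε : ℝ => q + ε * d) (𝓝 (0:ℝ)) (𝓝 (q + 0 * d)) :=
          (tendsto_id.mul_const d).const_add q
        simpa using this.mono_left nhdsWithin_le_nhds
      · filter_upwards [self_mem_nhdsWithin] with ε (hε : 0 < ε)
        have : ε * d < 0 := mul_neg_of_pos_of_neg hε hd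
        simp only [Set.mem_Iio]; linarith
    exact (IminU_tendsto_left hh hconc hdiff q).comp h1
  · simpa using tendsto_const_nhds
  · have h1 : Tendsto (fun ε : ℝ => q + ε * d) (𝓝[>] (0:ℝ)) (𝓝[>] q) := by
      refine tendsto_nhdsWithin_of_tendsto_nhds_of_eventually_within _ ?_ ?_
      · have : Tendsto (fun ε : ℝ => q + ε * d) (𝓝 (0:ℝ)) (𝓝 (q + 0 * d)) :=
          (tendsto_id.mul_const d).const_add q
        simpa using this.mono_left nhdsWithin_le_nhds
      · filter_upwards [self_mem_nhdsWithin] with ε (hε : 0 < ε)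
        have : 0 < ε * d := mul_pos hε hd
        simp only [Set.mem_Ioi]; linarith
    exact (IminU_tendsto_right hh hconc hdiff q).comp h1

lemma dualU_quot_tendsto (hh : 0 < h) (hcont : ContinuousOn f (Set.Ici 0))
    (hconc : StrictConcaveOn ℝ (Set.Ioo 0 h) f)
    (hdiff : ∀ z ∈ Set.Ioo 0 h, DifferentiableAt ℝ f z) (q d : ℝ) :
    Tendsto (fun ε : ℝ => (dualU f h (q + ε * d) - dualU f h q) / ε) (𝓝[>] (0:ℝ))
      (𝓝 (-(IminU f h q * d))) := by
  have hup : Tendsto (fun ε : ℝ => -(IminU f h (q + ε * d) * d)) (𝓝[>] (0:ℝ))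
      (𝓝 (-(IminU f h q * d))) :=
    (((IminU_comp_tendsto hh hconc hdiff q d).mul_const d).neg)
  refine tendsto_of_tendsto_of_tendsto_of_le_of_le' tendsto_const_nhds hup ?_ ?_
  · filter_upwards [self_mem_nhdsWithin] with ε (hε : 0 < ε)
    have hs := dualU_subgrad hh hcont hconc hdiff (q + ε * d) q
    rw [le_div_iff₀ hε]
    have : (q + ε * d - q) * IminU f h q = ε * (IminU f h q * d) := by ring
    rw [this] at hs
    linarith
  · filter_upwards [self_mem_nhdsWithin] with ε (hε : 0 < ε)
    have hs := dualU_subgrad hh hcont hconc hdiff q (q + ε * d)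
    rw [div_le_iff₀ hε]
    have : (q - (q + ε * d)) * IminU f h (q + ε * d) =
        -(IminU f h (q + ε * d) * d) * ε := by ring
    rw [this] at hs
    linarith
end core

section core
variable {f : ℝ → ℝ} {h : ℝ}

lemma dualU_eq_iSup (hh : 0 < h) (q : ℝ) (hcont : ContinuousOn f (Set.Ici 0))
    (hconc : StrictConcaveOn ℝ (Set.Ioo 0 h) f)
    (hdiff : ∀ z ∈ Set.Ioo 0 h, DifferentiableAt ℝ f z) :
    dualU f h q = ⨆ r : ℚ, (f (min (max (r:ℝ) 0) h) - q * min (max (r:ℝ) 0) h) := by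
  have hG := IminU_isGreatest hh hcont hconc hdiff q
  have hZ : IminU f h q ∈ Set.Icc 0 h := IminU_mem hh q
  set Z := IminU f h q with hZdef
  have hmem : ∀ r : ℚ, min (max (r:ℝ) 0) h ∈ Set.Icc 0 h :=
    fun r => ⟨le_min (le_max_right _ _) hh.le, min_le_right _ _⟩
  have hle : ∀ r : ℚ, f (min (max (r:ℝ) 0) h) - q * min (max (r:ℝ) 0) h ≤ f Z - q * Z :=
    fun r => hG.2 ⟨_, hmem r, rfl⟩
  have hbdd : BddAbove (Set.range fun r : ℚ =>
      f (min (max (r:ℝ) 0) h) - q * min (max (r:ℝ) 0) h) := by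
    refine ⟨f Z - q * Z, ?_⟩
    rintro x ⟨r, rfl⟩
    exact hle r
  rw [dualU_eq hh hcont hconc hdiff q]
  refine le_antisymm ?_ (ciSup_le hle)
  -- approximate Z from below by rationals
  have hseq : ∀ n : ℕ, ∃ r : ℚ, Z - 1 / (n + 1) < (r : ℝ) ∧ (r : ℝ) < Z + 1 / (n + 1) := by
    intro n
    obtain ⟨r, hr1, hr2⟩ := exists_rat_btwn (show Z - 1 / ((n:ℝ) + 1) < Z + 1 / (n + 1) by
      have : (0:ℝ) < 1 / ((n:ℝ) + 1) := by positivity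
      linarith)
    exact ⟨r, hr1, hr2⟩
  choose r hr1 hr2 using hseq
  have hrt : Tendsto (fun n : ℕ => ((r n : ℝ))) atTop (𝓝 Z) := by
    have h1 : Tendsto (fun n : ℕ => Z - 1 / ((n:ℝ) + 1)) atTop (𝓝 Z) := by
      simpa using (tendsto_const_nhds (x := Z)).sub tendsto_one_div_add_atTop_nhds_zero_nat
    have h2 : Tendsto (fun n : ℕ => Z + 1 / ((n:ℝ) + 1)) atTop (𝓝 Z) := by
      simpa using (tendsto_const_nhds (x := Z)).add tendsto_one_div_add_atTop_nhds_zero_nat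
    exact tendsto_of_tendsto_of_tendsto_of_le_of_le h1 h2
      (fun n => (hr1 n).le) (fun n => (hr2 n).le)
  set v : ℕ → ℝ := fun n => min (max ((r n : ℝ)) 0) h with hv
  have hvt : Tendsto v atTop (𝓝 Z) := by
    have : Tendsto (fun n => min (max ((r n : ℝ)) 0) h) atTop (𝓝 (min (max Z 0) h)) :=
      ((hrt.max tendsto_const_nhds).min tendsto_const_nhds)
    rwa [max_eq_left hZ.1, min_eq_left hZ.2] at this
  have hft : Tendsto (fun n => f (v n) - q * v n) atTop (𝓝 (f Z - q * Z)) := by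
    have hfc : Tendsto (fun n => f (v n)) atTop (𝓝 (f Z)) := by
      refine ((hcont Z hZ.1).tendsto).comp ?_
      refine tendsto_nhdsWithin_of_tendsto_nhds_of_eventually_within _ hvt ?_
      exact Eventually.of_forall (fun n => (hmem (r n)).1)
    exact hfc.sub ((tendsto_const_nhds).mul hvt)
  refine le_of_tendsto hft (Eventually.of_forall (fun n => ?_))
  exact le_ciSup hbdd (r n)
end core

section core
variable {f : ℝ → ℝ} {h : ℝ}

lemma dualU_bounds (hh : 0 < h) (hmono : MonotoneOn f (Set.Ici 0))
    (hcont : ContinuousOn f (Set.Ici 0))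
    (hconc : StrictConcaveOn ℝ (Set.Ioo 0 h) f)
    (hdiff : ∀ z ∈ Set.Ioo 0 h, DifferentiableAt ℝ f z)
    (hf0 : 0 ≤ f 0) {q : ℝ} (hq : 0 ≤ q) :
    0 ≤ dualU f h q ∧ dualU f h q ≤ f h := by
  have hG := IminU_isGreatest hh hcont hconc hdiff q
  have hZ := IminU_mem (f := f) hh q
  rw [dualU_eq hh hcont hconc hdiff q]
  constructor
  · have h0 : f 0 - q * 0 ≤ f (IminU f h q) - q * IminU f h q :=
      hG.2 ⟨0, ⟨le_refl 0, hh.le⟩, rfl⟩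
    have : f 0 - q * 0 = f 0 := by ring
    rw [this] at h0
    linarith
  · have h1 : f (IminU f h q) ≤ f h := hmono hZ.1 hh.le hZ.2
    have h2 : 0 ≤ q * IminU f h q := mul_nonneg hq hZ.1
    linarith
end core


/-- Gateaux derivative of the dual objective along `ξ^{(ε)} := ε·ξ' + (1−ε)·ξ*`
and the resulting optimality inequality. -/
theorem stmt12 {Ω : Type*} [MeasurableSpace Ω] (μ : Measure Ω) [IsProbabilityMeasure μ]
    (H : Ω → ℝ) (hHmeas : Measurable H) (hHpos : ∀ ω, 0 < H ω)
    (U : Ω → ℝ → ℝ)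
    (hU0 : ∀ ω, ∀ z, 0 ≤ z → 0 ≤ U ω z)
    (hUmono : ∀ ω, MonotoneOn (U ω) (Set.Ici 0))
    (hUcont : ∀ ω, ContinuousOn (U ω) (Set.Ici 0))
    (hUconc : ∀ ω, StrictConcaveOn ℝ (Set.Ioo 0 (H ω)) (U ω))
    (hUdiff : ∀ ω, ∀ z ∈ Set.Ioo 0 (H ω), DifferentiableAt ℝ (U ω) z)
    (hUcap : ∀ ω, ∀ w, 0 ≤ w → U ω w = U ω (min w (H ω)))
    (hUmeas : ∀ z, Measurable fun ω => U ω z)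
    (hUint : Integrable (fun ω => U ω (H ω)) μ)
    (y : ℝ) (hy : 0 < y)
    (ξs ξ' : Ω → ℝ)
    (hξsmeas : Measurable ξs) (hξspos : ∀ ω, 0 ≤ ξs ω)
    (hξ'meas : Measurable ξ') (hξ'pos : ∀ ω, 0 ≤ ξ' ω)
    (hξsHint : Integrable (fun ω => ξs ω * H ω) μ)
    (hξ'Hint : Integrable (fun ω => ξ' ω * H ω) μ) :
    Tendsto
      (fun ε : ℝ =>
        ((∫ ω, dualU (U ω) (H ω) (y * (ε * ξ' ω + (1 - ε) * ξs ω)) ∂μ) -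
            ∫ ω, dualU (U ω) (H ω) (y * ξs ω) ∂μ) / ε)
      (nhdsWithin 0 (Set.Ioi 0))
      (nhds (-(y * ∫ ω, IminU (U ω) (H ω) (y * ξs ω) * (ξ' ω - ξs ω) ∂μ))) ∧
    ((∀ ε : ℝ, 0 < ε → ε ≤ 1 →
        (∫ ω, dualU (U ω) (H ω) (y * ξs ω) ∂μ) ≤
          ∫ ω, dualU (U ω) (H ω) (y * (ε * ξ' ω + (1 - ε) * ξs ω)) ∂μ) →
      (∫ ω, IminU (U ω) (H ω) (y * ξs ω) * ξ' ω ∂μ) ≤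
        ∫ ω, IminU (U ω) (H ω) (y * ξs ω) * ξs ω ∂μ) := by
  set d : Ω → ℝ := fun ω => y * (ξ' ω - ξs ω) with hd
  set Z : Ω → ℝ := fun ω => IminU (U ω) (H ω) (y * ξs ω) with hZ
  -- measurability of dualU compositions
  have hdual_meas : ∀ (g : Ω → ℝ), Measurable g →
      Measurable fun ω => dualU (U ω) (H ω) (g ω) := by
    intro g hg
    have heq : (fun ω => dualU (U ω) (H ω) (g ω)) = fun ω =>
        ⨆ r : ℚ, (U ω (max (r:ℝ) 0) - g ω * min (max (r:ℝ) 0) (H ω)) := by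
      funext ω
      rw [dualU_eq_iSup (hHpos ω) (g ω) (hUcont ω) (hUconc ω) (hUdiff ω)]
      congr 1
      funext r
      rw [← hUcap ω (max (r:ℝ) 0) (le_max_right _ _)]
    rw [heq]
    exact Measurable.iSup fun r => (hUmeas _).sub (hg.mul (measurable_const.min hHmeas))
  have hqmeas : Measurable fun ω => y * ξs ω := hξsmeas.const_mul y
  -- measurability of Z
  have hZmeas : Measurable Z := by
    have hFn : ∀ n : ℕ, Measurable fun ω =>
        (dualU (U ω) (H ω) (y * ξs ω + (1/((n:ℝ)+1)) * 1) -
          dualU (U ω) (H ω) (y * ξs ω)) / (1/((n:ℝ)+1)) :=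
      fun n => ((hdual_meas _ (hqmeas.add_const _)).sub (hdual_meas _ hqmeas)).div_const _
    have hεt : Tendsto (fun n : ℕ => 1/((n:ℝ)+1)) atTop (𝓝[>] (0:ℝ)) :=
      tendsto_nhdsWithin_of_tendsto_nhds_of_eventually_within _
        tendsto_one_div_add_atTop_nhds_zero_nat
        (Eventually.of_forall fun n => by simp only [Set.mem_Ioi]; positivity)
    have hlim : ∀ ω, Tendsto (fun n : ℕ =>
        (dualU (U ω) (H ω) (y * ξs ω + (1/((n:ℝ)+1)) * 1) -
          dualU (U ω) (H ω) (y * ξs ω)) / (1/((n:ℝ)+1))) atTop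
        (𝓝 (-(IminU (U ω) (H ω) (y * ξs ω) * 1))) :=
      fun ω => (dualU_quot_tendsto (hHpos ω) (hUcont ω) (hUconc ω) (hUdiff ω)
        (y * ξs ω) 1).comp hεt
    have hm : Measurable fun ω => -(IminU (U ω) (H ω) (y * ξs ω) * 1) :=
      measurable_of_tendsto_metrizable' atTop hFn (tendsto_pi_nhds.2 hlim)
    convert hm.neg using 1
    funext ω
    simp [hZ]
  have hZbd : ∀ ω, 0 ≤ Z ω ∧ Z ω ≤ H ω := fun ω => by
    have := IminU_mem (f := U ω) (hHpos ω) (y * ξs ω)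
    exact ⟨this.1, this.2⟩
  -- integrability of dualU compositions with nonneg argument
  have hDint : ∀ (g : Ω → ℝ), Measurable g → (∀ ω, 0 ≤ g ω) →
      Integrable (fun ω => dualU (U ω) (H ω) (g ω)) μ := by
    intro g hg hg0
    refine Integrable.mono hUint (hdual_meas g hg).aestronglyMeasurable
      (Eventually.of_forall fun ω => ?_)
    obtain ⟨h0, h1⟩ := dualU_bounds (hHpos ω) (hUmono ω) (hUcont ω) (hUconc ω) (hUdiff ω)
      (hU0 ω 0 le_rfl) (hg0 ω)
    rw [Real.norm_eq_abs, abs_of_nonneg h0, Real.norm_eq_abs]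
    exact h1.trans (le_abs_self _)
  have hInt0 : Integrable (fun ω => dualU (U ω) (H ω) (y * ξs ω)) μ :=
    hDint _ hqmeas (fun ω => mul_nonneg hy.le (hξspos ω))
  have hIntε : ∀ ε : ℝ, 0 ≤ ε → ε ≤ 1 →
      Integrable (fun ω => dualU (U ω) (H ω) (y * (ε * ξ' ω + (1 - ε) * ξs ω))) μ := by
    intro ε hε0 hε1
    refine hDint _ (((hξ'meas.const_mul ε).add (hξsmeas.const_mul (1 - ε))).const_mul y) ?_
    intro ω
    have h1 : 0 ≤ ε * ξ' ω := mul_nonneg hε0 (hξ'pos ω)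
    have h2 : 0 ≤ (1 - ε) * ξs ω := mul_nonneg (by linarith) (hξspos ω)
    exact mul_nonneg hy.le (by linarith)
  -- the main dominated convergence
  have hbound_int : Integrable (fun ω => y * (ξ' ω * H ω) + y * (ξs ω * H ω)) μ :=
    (hξ'Hint.const_mul y).add (hξsHint.const_mul y)
  have hmain : Tendsto (fun ε : ℝ => ∫ ω,
      (dualU (U ω) (H ω) (y * ξs ω + ε * d ω) - dualU (U ω) (H ω) (y * ξs ω)) / ε ∂μ)
      (𝓝[>] (0:ℝ)) (𝓝 (∫ ω, -(Z ω * d ω) ∂μ)) := by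
    refine tendsto_integral_filter_of_dominated_convergence
      (fun ω => y * (ξ' ω * H ω) + y * (ξs ω * H ω)) ?_ ?_ hbound_int ?_
    · filter_upwards [self_mem_nhdsWithin] with ε (hε : 0 < ε)
      have hgm : Measurable fun ω => y * ξs ω + ε * d ω :=
        hqmeas.add ((((hξ'meas.sub hξsmeas).const_mul y)).const_mul ε)
      exact (((hdual_meas _ hgm).sub (hdual_meas _ hqmeas)).div_const ε).aestronglyMeasurable
    · filter_upwards [self_mem_nhdsWithin] with ε (hε : 0 < ε)
      refine Eventually.of_forall fun ω => ?_
      rw [Real.norm_eq_abs, abs_div, abs_of_pos hε, div_le_iff₀ hε]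
      have hlip := dualU_lip (hHpos ω) (hUcont ω) (hUconc ω) (hUdiff ω)
        (y * ξs ω + ε * d ω) (y * ξs ω)
      have harg : y * ξs ω + ε * d ω - y * ξs ω = ε * d ω := by ring
      rw [harg, abs_mul, abs_of_pos hε] at hlip
      have hdb : |d ω| ≤ y * (ξ' ω + ξs ω) := by
        rw [hd, abs_mul, abs_of_pos hy]
        have := abs_sub (ξ' ω) (ξs ω)
        have h1 : |ξ' ω - ξs ω| ≤ |ξ' ω| + |ξs ω| := abs_sub _ _
        rw [abs_of_nonneg (hξ'pos ω), abs_of_nonneg (hξspos ω)] at h1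
        exact mul_le_mul_of_nonneg_left h1 hy.le
      have hH := (hHpos ω).le
      calc |dualU (U ω) (H ω) (y * ξs ω + ε * d ω) - dualU (U ω) (H ω) (y * ξs ω)|
          ≤ H ω * (ε * |d ω|) := hlip
        _ = (H ω * |d ω|) * ε := by ring
        _ ≤ (y * (ξ' ω * H ω) + y * (ξs ω * H ω)) * ε := by
            have : H ω * |d ω| ≤ H ω * (y * (ξ' ω + ξs ω)) :=
              mul_le_mul_of_nonneg_left hdb hH
            nlinarith
    · refine Eventually.of_forall fun ω => ?_
      exact dualU_quot_tendsto (hHpos ω) (hUcont ω) (hUconc ω) (hUdiff ω) (y * ξs ω) (d ω)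
  -- identify limit value
  have habs : ∀ ω, |ξ' ω - ξs ω| ≤ ξ' ω + ξs ω := by
    intro ω
    have h1 : |ξ' ω - ξs ω| ≤ |ξ' ω| + |ξs ω| := abs_sub _ _
    rwa [abs_of_nonneg (hξ'pos ω), abs_of_nonneg (hξspos ω)] at h1
  have hb2 : Integrable (fun ω => ξ' ω * H ω + ξs ω * H ω) μ := hξ'Hint.add hξsHint
  have hIZint : Integrable (fun ω => Z ω * (ξ' ω - ξs ω)) μ := by
    refine Integrable.mono hb2
      ((hZmeas.mul (hξ'meas.sub hξsmeas)).aestronglyMeasurable)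
      (Eventually.of_forall fun ω => ?_)
    obtain ⟨hZ0, hZH⟩ := hZbd ω
    rw [Real.norm_eq_abs, Real.norm_eq_abs, abs_mul, abs_of_nonneg hZ0]
    have h2 : Z ω * |ξ' ω - ξs ω| ≤ H ω * (ξ' ω + ξs ω) :=
      mul_le_mul hZH (habs ω) (abs_nonneg _) (hHpos ω).le
    refine h2.trans (le_trans (le_of_eq (by ring)) (le_abs_self _))
  have hval : (∫ ω, -(Z ω * d ω) ∂μ) = -(y * ∫ ω, Z ω * (ξ' ω - ξs ω) ∂μ) := by
    have h1 : (fun ω => -(Z ω * d ω)) = fun ω => -(y * (Z ω * (ξ' ω - ξs ω))) := by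
      funext ω; simp only [hd]; ring
    rw [h1, integral_neg, integral_const_mul]
  have hcongr : ∀ᶠ ε in 𝓝[>] (0:ℝ),
      ((∫ ω, dualU (U ω) (H ω) (y * (ε * ξ' ω + (1 - ε) * ξs ω)) ∂μ) -
        ∫ ω, dualU (U ω) (H ω) (y * ξs ω) ∂μ) / ε =
      ∫ ω, (dualU (U ω) (H ω) (y * ξs ω + ε * d ω) -
        dualU (U ω) (H ω) (y * ξs ω)) / ε ∂μ := by
    filter_upwards [Ioo_mem_nhdsGT_of_mem (Set.left_mem_Ico.2 zero_lt_one)] with ε hε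
    obtain ⟨hε0, hε1⟩ := hε
    have harg : (fun ω => (dualU (U ω) (H ω) (y * ξs ω + ε * d ω) -
        dualU (U ω) (H ω) (y * ξs ω)) / ε)
        = fun ω => (dualU (U ω) (H ω) (y * (ε * ξ' ω + (1 - ε) * ξs ω)) -
        dualU (U ω) (H ω) (y * ξs ω)) / ε := by
      funext ω
      have harg2 : y * ξs ω + ε * d ω = y * (ε * ξ' ω + (1 - ε) * ξs ω) := by
        simp only [hd]; ring
      rw [harg2]
    rw [harg, integral_div, integral_sub (hIntε ε hε0.le hε1.le) hInt0]
  have htend : Tendsto (fun ε : ℝ =>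
      ((∫ ω, dualU (U ω) (H ω) (y * (ε * ξ' ω + (1 - ε) * ξs ω)) ∂μ) -
        ∫ ω, dualU (U ω) (H ω) (y * ξs ω) ∂μ) / ε) (𝓝[>] (0:ℝ))
      (𝓝 (-(y * ∫ ω, Z ω * (ξ' ω - ξs ω) ∂μ))) := by
    rw [← hval]
    exact Tendsto.congr' (hcongr.mono fun ε hε => hε.symm) hmain
  refine ⟨htend, ?_⟩
  intro hopt
  have hge : (0:ℝ) ≤ -(y * ∫ ω, Z ω * (ξ' ω - ξs ω) ∂μ) := by
    refine ge_of_tendsto htend ?_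
    filter_upwards [Ioo_mem_nhdsGT_of_mem (Set.left_mem_Ico.2 zero_lt_one)] with ε hε
    exact div_nonneg (sub_nonneg.2 (hopt ε hε.1 hε.2.le)) hε.1.le
  have hI : (∫ ω, Z ω * (ξ' ω - ξs ω) ∂μ) ≤ 0 := by nlinarith
  have hZξ'int : Integrable (fun ω => Z ω * ξ' ω) μ := by
    refine Integrable.mono hξ'Hint ((hZmeas.mul hξ'meas).aestronglyMeasurable)
      (Eventually.of_forall fun ω => ?_)
    obtain ⟨hZ0, hZH⟩ := hZbd ω
    rw [Real.norm_eq_abs, Real.norm_eq_abs, abs_mul, abs_of_nonneg hZ0,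
      abs_of_nonneg (hξ'pos ω)]
    refine le_trans (mul_le_mul_of_nonneg_right hZH (hξ'pos ω)) ?_
    exact le_trans (le_of_eq (mul_comm _ _)) (le_abs_self _)
  have hZξsint : Integrable (fun ω => Z ω * ξs ω) μ := by
    refine Integrable.mono hξsHint ((hZmeas.mul hξsmeas).aestronglyMeasurable)
      (Eventually.of_forall fun ω => ?_)
    obtain ⟨hZ0, hZH⟩ := hZbd ω
    rw [Real.norm_eq_abs, Real.norm_eq_abs, abs_mul, abs_of_nonneg hZ0,
      abs_of_nonneg (hξspos ω)]
    refine le_trans (mul_le_mul_of_nonneg_right hZH (hξspos ω)) ?_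
    exact le_trans (le_of_eq (mul_comm _ _)) (le_abs_self _)
  have hsplit : (∫ ω, Z ω * (ξ' ω - ξs ω) ∂μ) =
      (∫ ω, Z ω * ξ' ω ∂μ) - ∫ ω, Z ω * ξs ω ∂μ := by
    rw [← integral_sub hZξ'int hZξsint]
    congr 1; funext ω; ring
  rw [hsplit] at hI
  linarith
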